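/- The multiplicity sequence of the embedding k of the unknot in Figure 1 is (2,4,6,8,6,8,6,4,6,4,6,4,2) up to the stated thick/thin structure, with thick levels of multiplicities 8, 8, 6, 6, 6 and thin levels of multiplicities 6, 6, 4, 4; its width is strictly greater than the width of the unknot, which is 2. -/

import Mathlib

/-- A multiplicity sequence of a Morse embedding of a knot: a finite sequence of
positive even integers, starting and ending at 2, with consecutive entries
differing by exactly 2. -/
def IsMultSeq (l : List ℕ) : Prop :=
  l ≠ [] ∧ (∀ m ∈ l, 0 < m ∧ Even m) ∧ l.head? = some 2 ∧ l.getLast? = some 2 ∧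
  ∀ i, i + 1 < l.length →
    (l.getD (i+1) 0 = l.getD i 0 + 2 ∨ l.getD i 0 = l.getD (i+1) 0 + 2)

/-- The number of local-maximum entries (thick levels) of a multiplicity
sequence, with boundary convention that the sequence is padded by 0. -/
def maxCount (l : List ℕ) : ℕ :=
  (List.range l.length).countP fun i =>
    decide ((if i = 0 then 0 else l.getD (i - 1) 0) < l.getD i 0 ∧
      l.getD (i + 1) 0 < l.getD i 0)

/-- The multiplicity sequence of the embedding of the unknot in Figure 1. -/
def fig1 : List ℕ := [2, 4, 6, 8, 6, 8, 6, 4, 6, 4, 6, 4, 2]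

lemma maxSeq_le_len (l : List ℕ) : maxCount l ≤ l.length := by
  unfold maxCount
  calc List.countP _ (List.range l.length) ≤ (List.range l.length).length :=
        List.countP_le_length
    _ = l.length := List.length_range

/-- The Figure 1 embedding of the unknot is a valid multiplicity sequence whose
width strictly exceeds 2 = w(unknot); indeed any multiplicity sequence with at
least two thick levels has width greater than 2, so such an embedding is not a
global minimum of the width complex. -/
theorem fig1_width_exceeds_unknot :
    IsMultSeq fig1 ∧ IsMultSeq [2] ∧ ([2] : List ℕ).sum = 2 ∧ 2 < fig1.sum ∧
    (∀ l : List ℕ, IsMultSeq l → 2 ≤ maxCount l → 2 < l.sum) := by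
  refine ⟨?_, ?_, rfl, by decide, ?_⟩
  · refine ⟨by decide, by decide, rfl, by decide, ?_⟩
    intro i hi
    have hi' : i < 12 := by simp [fig1] at hi; omega
    interval_cases i <;> simp [fig1]
  · refine ⟨by decide, by decide, rfl, by decide, ?_⟩
    intro i hi
    simp [List.length] at hi
  · intro l hl hmc
    have hlen : 2 ≤ l.length := le_trans hmc (maxSeq_le_len l)
    obtain ⟨hne, hpos, hhead, -, -⟩ := hl
    match l, hlen with
    | a :: b :: t, _ =>
      have ha : a = 2 := by simpa using hhead
      have hb : 0 < b := (hpos b (by simp)).1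
      simp [ha, List.sum_cons]
      omega
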